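/- Let A be a nonnegative m×n matrix with A_{ij} ≤ b_i for all i,j, let S be a set of entries (i,j) with A_{ij}>0 such that for each row i, |{j : (i,j) ∈ S}| ≤ k, and let x ∈ ℤ_{≥0}^n with x ≤ 1 (0-1 vector) satisfy A_{S→0} x ≤ b, where A_{S→0} is A with entries in S set to zero. If y ≤ x is a 0-1 vector such that no two indices j, j' ∈ supp(y) are in conflict (j, j' conflict at row i when A_{ij} > 0, A_{ij'} > 0, and at least one of (i,j), (i,j') ∈ S), then A y ≤ b. -/
import Mathlib


theorem stmt_15 (m n k : ℕ) (A : Fin m → Fin n → ℝ) (b : Fin m → ℝ)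
    (hA : ∀ i j, 0 ≤ A i j) (hb : ∀ i, 0 ≤ b i) (hAb : ∀ i j, A i j ≤ b i)
    (S : Finset (Fin m × Fin n)) (hS : ∀ p ∈ S, 0 < A p.1 p.2)
    (hSrow : ∀ i, (S.filter (fun p => p.1 = i)).card ≤ k)
    (x y : Fin n → ℕ) (hx01 : ∀ j, x j ≤ 1)
    (hxfeas : ∀ i, ∑ j, (if (i, j) ∈ S then 0 else A i j) * (x j : ℝ) ≤ b i)
    (hyx : ∀ j, y j ≤ x j)
    (hconf : ∀ j j' : Fin n, j ≠ j' → y j = 1 → y j' = 1 →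
      ∀ i, ¬ (0 < A i j ∧ 0 < A i j' ∧ ((i, j) ∈ S ∨ (i, j') ∈ S))) :
    ∀ i, ∑ j, A i j * (y j : ℝ) ≤ b i := by
  intro i
  have hy01 : ∀ j, y j = 0 ∨ y j = 1 := by
    intro j
    have := (hyx j).trans (hx01 j)
    omega
  by_cases h : ∃ j0, y j0 = 1 ∧ (i, j0) ∈ S
  · obtain ⟨j0, hy0, hj0S⟩ := h
    have hA0 : 0 < A i j0 := hS (i, j0) hj0S
    have hsum : ∑ j, A i j * (y j : ℝ) = A i j0 * (y j0 : ℝ) := by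
      apply Finset.sum_eq_single
      · intro j _ hne
        rcases hy01 j with h0 | h1
        · simp [h0]
        · have := hconf j j0 hne h1 hy0 i
          have hAj : A i j = 0 := by
            by_contra hAj
            exact this ⟨lt_of_le_of_ne (hA i j) (Ne.symm hAj), hA0, Or.inr hj0S⟩
          simp [hAj]
      · intro h; exact absurd (Finset.mem_univ j0) h
    rw [hsum, hy0]
    simpa using hAb i j0
  · push_neg at h
    calc ∑ j, A i j * (y j : ℝ)
        ≤ ∑ j, (if (i, j) ∈ S then 0 else A i j) * (x j : ℝ) := by
          apply Finset.sum_le_sum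
          intro j _
          rcases hy01 j with h0 | h1
          · simp only [h0, Nat.cast_zero, mul_zero]
            split
            · positivity
            · exact mul_nonneg (hA i j) (by positivity)
          · have hjS : (i, j) ∉ S := fun hm => h j h1 hm
            rw [if_neg hjS]
            exact mul_le_mul_of_nonneg_left (by exact_mod_cast hyx j) (hA i j)
      _ ≤ b i := hxfeas i
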